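/- Let S = {(v,w) ∈ ℕ² : v + w ≤ 4} index the degree-4 total order basis on the reference quadrilateral. Let M be the diagonal real S×S matrix with M_{(v,w),(v,w)} = 4/((2v+1)(2w+1)). For real parameters q0, q1, q2, q3, q4, q5, let Q be the symmetric S×S matrix whose only nonzero entries (listing one entry of each symmetric pair) are Q_{(0,4),(0,4)} = Q_{(4,0),(4,0)} = q0, Q_{(1,3),(1,3)} = Q_{(3,1),(3,1)} = q1, Q_{(2,2),(2,2)} = q2, Q_{(0,4),(2,2)} = Q_{(2,2),(4,0)} = q3, Q_{(1,3),(3,1)} = q4, and Q_{(0,4),(4,0)} = q5. Then M + Q is positive definite if and only if the following five conditions all hold: q0 > −4/9; q1 > −4/21; 36·q0 + 225·q0·q2 + 100·q2 − 225·q3² + 16 > 0; (21·q1 + 4)² − 441·q4² > 0; and (9·q0 − 9·q5 + 4)·(9·q0·(25·q2 + 4) + 25·q2·(9·q5 + 4) + 2·(−225·q3² + 18·q5 + 8)) > 0. -/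

import Mathlib

open Matrix

/-- The index set of the degree-4 total order basis: modes `(v,w)` with `v + w ≤ 4`. -/
def TO4 : Type := {p : Fin 5 × Fin 5 // (p.1 : ℕ) + (p.2 : ℕ) ≤ 4}

instance : Fintype TO4 := Subtype.fintype _
instance : DecidableEq TO4 := Subtype.instDecidableEq

/-- Modal mass matrix of the degree-4 total order Legendre basis:
`M_{(v,w),(v,w)} = 4/((2v+1)(2w+1))`. -/
noncomputable def massTO4 : Matrix TO4 TO4 ℝ :=
  Matrix.diagonal fun p =>
    (4 : ℝ) / (((2 * (p.val.1 : ℕ) + 1) * (2 * (p.val.2 : ℕ) + 1) : ℕ) : ℝ)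

/-- The symmetric filter matrix `Q(q0, …, q5)` for the degree-4 total order basis. -/
def filterTO4 (q0 q1 q2 q3 q4 q5 : ℝ) : Matrix TO4 TO4 ℝ :=
  fun i j =>
    if (i.val = (0, 4) ∧ j.val = (0, 4)) ∨ (i.val = (4, 0) ∧ j.val = (4, 0)) then q0
    else if (i.val = (1, 3) ∧ j.val = (1, 3)) ∨ (i.val = (3, 1) ∧ j.val = (3, 1)) then q1
    else if i.val = (2, 2) ∧ j.val = (2, 2) then q2
    else if (i.val = (0, 4) ∧ j.val = (2, 2)) ∨ (i.val = (2, 2) ∧ j.val = (0, 4)) ∨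
            (i.val = (2, 2) ∧ j.val = (4, 0)) ∨ (i.val = (4, 0) ∧ j.val = (2, 2)) then q3
    else if (i.val = (1, 3) ∧ j.val = (3, 1)) ∨ (i.val = (3, 1) ∧ j.val = (1, 3)) then q4
    else if (i.val = (0, 4) ∧ j.val = (4, 0)) ∨ (i.val = (4, 0) ∧ j.val = (0, 4)) then q5
    else 0

/-- Shorthand for basis elements of `TO4`. -/
def bm (v w : Fin 5) (h : (v : ℕ) + (w : ℕ) ≤ 4 := by decide) : TO4 := ⟨(v, w), h⟩

lemma univ_eq : (Finset.univ : Finset TO4) =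
    {bm 0 0, bm 0 1, bm 0 2, bm 0 3, bm 0 4, bm 1 0, bm 1 1, bm 1 2, bm 1 3,
     bm 2 0, bm 2 1, bm 2 2, bm 3 0, bm 3 1, bm 4 0} := by decide

lemma sum_expand (f : TO4 → ℝ) : ∑ i : TO4, f i =
    f (bm 0 0) + f (bm 0 1) + f (bm 0 2) + f (bm 0 3) + f (bm 0 4) + f (bm 1 0) + f (bm 1 1) +
    f (bm 1 2) + f (bm 1 3) + f (bm 2 0) + f (bm 2 1) + f (bm 2 2) + f (bm 3 0) + f (bm 3 1) +
    f (bm 4 0) := by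
  rw [univ_eq]
  repeat rw [Finset.sum_insert (by decide)]
  rw [Finset.sum_singleton]; ring

lemma quad (q0 q1 q2 q3 q4 q5 : ℝ) (x : TO4 → ℝ) :
    x ⬝ᵥ (massTO4 + filterTO4 q0 q1 q2 q3 q4 q5) *ᵥ x =
      4 * x (bm 0 0) ^ 2 + 4/3 * x (bm 0 1) ^ 2 + 4/5 * x (bm 0 2) ^ 2 + 4/7 * x (bm 0 3) ^ 2 +
      4/3 * x (bm 1 0) ^ 2 + 4/9 * x (bm 1 1) ^ 2 + 4/15 * x (bm 1 2) ^ 2 +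
      4/5 * x (bm 2 0) ^ 2 + 4/15 * x (bm 2 1) ^ 2 + 4/7 * x (bm 3 0) ^ 2 +
      ((4/9 + q0) * x (bm 0 4) ^ 2 + (4/9 + q0) * x (bm 4 0) ^ 2 + (4/25 + q2) * x (bm 2 2) ^ 2 +
       2 * q3 * x (bm 0 4) * x (bm 2 2) + 2 * q3 * x (bm 2 2) * x (bm 4 0) +
       2 * q5 * x (bm 0 4) * x (bm 4 0)) +
      ((4/21 + q1) * x (bm 1 3) ^ 2 + (4/21 + q1) * x (bm 3 1) ^ 2 +
       2 * q4 * x (bm 1 3) * x (bm 3 1)) := by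
  rw [Matrix.add_mulVec, dotProduct_add]
  have hm : x ⬝ᵥ massTO4 *ᵥ x = ∑ i : TO4, ((4:ℝ) / (((2 * (i.val.1 : ℕ) + 1) * (2 * (i.val.2 : ℕ) + 1) : ℕ) : ℝ)) * x i * x i := by
    simp only [dotProduct, massTO4, Matrix.mulVec_diagonal]
    exact Finset.sum_congr rfl fun i _ => by ring
  rw [hm, sum_expand]
  have hf : x ⬝ᵥ filterTO4 q0 q1 q2 q3 q4 q5 *ᵥ x =
      ∑ i : TO4, x i * ∑ j : TO4, filterTO4 q0 q1 q2 q3 q4 q5 i j * x j := rfl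
  rw [hf, sum_expand]
  simp only [sum_expand]
  simp (config := { decide := true }) only [filterTO4, bm]
  norm_num [bm, show ((2:Fin 5):ℕ)=2 from rfl, show ((3:Fin 5):ℕ)=3 from rfl,
    show ((4:Fin 5):ℕ)=4 from rfl]
  ring

lemma herm (q0 q1 q2 q3 q4 q5 : ℝ) :
    (massTO4 + filterTO4 q0 q1 q2 q3 q4 q5).IsHermitian := by
  have h1 : (massTO4).IsHermitian := Matrix.isHermitian_diagonal _
  have h2 : (filterTO4 q0 q1 q2 q3 q4 q5).IsHermitian := by
    unfold Matrix.IsHermitian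
    ext i j
    rw [Matrix.conjTranspose_apply, star_trivial]
    show filterTO4 q0 q1 q2 q3 q4 q5 j i = filterTO4 q0 q1 q2 q3 q4 q5 i j
    unfold filterTO4
    exact if_congr (by tauto) rfl (if_congr (by tauto) rfl (if_congr (by tauto) rfl
      (if_congr (by tauto) rfl (if_congr (by tauto) rfl (if_congr (by tauto) rfl rfl)))))
  exact h1.add h2

lemma posdef_iff (A : Matrix TO4 TO4 ℝ) :
    A.PosDef ↔ A.IsHermitian ∧ ∀ x ≠ 0, 0 < x ⬝ᵥ A *ᵥ x := by
  rw [Matrix.posDef_iff_dotProduct_mulVec]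
  constructor
  · rintro ⟨h1, h2⟩
    exact ⟨h1, fun x hx => by simpa using h2 hx⟩
  · rintro ⟨h1, h2⟩
    exact ⟨h1, fun ⦃x⦄ hx => by simpa using h2 x hx⟩

lemma qf3_nonneg (a c q3 q5 : ℝ) (hc : 0 < c) (h4 : 0 < a - q5)
    (h5 : 0 < (a + q5) * c - 2 * q3 ^ 2) (X Y Z : ℝ) :
    0 ≤ a*X^2 + a*Z^2 + c*Y^2 + 2*q3*X*Y + 2*q3*Y*Z + 2*q5*X*Z := by
  have key : 2*c*(a*X^2 + a*Z^2 + c*Y^2 + 2*q3*X*Y + 2*q3*Y*Z + 2*q5*X*Z) =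
      c*(a-q5)*(X-Z)^2 + ((a+q5)*c-2*q3^2)*(X+Z)^2 + 2*(c*Y+q3*(X+Z))^2 := by ring
  nlinarith [key, mul_nonneg (mul_pos hc h4).le (sq_nonneg (X-Z)),
    mul_nonneg h5.le (sq_nonneg (X+Z)), sq_nonneg (c*Y+q3*(X+Z)), hc]

lemma qf3_pos (a c q3 q5 : ℝ) (hc : 0 < c) (h4 : 0 < a - q5)
    (h5 : 0 < (a + q5) * c - 2 * q3 ^ 2) (X Y Z : ℝ) (hx : X ≠ 0 ∨ Y ≠ 0 ∨ Z ≠ 0) :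
    0 < a*X^2 + a*Z^2 + c*Y^2 + 2*q3*X*Y + 2*q3*Y*Z + 2*q5*X*Z := by
  have key : 2*c*(a*X^2 + a*Z^2 + c*Y^2 + 2*q3*X*Y + 2*q3*Y*Z + 2*q5*X*Z) =
      c*(a-q5)*(X-Z)^2 + ((a+q5)*c-2*q3^2)*(X+Z)^2 + 2*(c*Y+q3*(X+Z))^2 := by ring
  by_cases hs : X + Z = 0
  · rcases hx with hX | hY | hZ
    · have hd : X - Z ≠ 0 := fun h => hX (by linarith [h, hs])
      nlinarith [key, mul_pos (mul_pos hc h4) (show (0:ℝ) < (X-Z)^2 by positivity),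
        mul_nonneg h5.le (sq_nonneg (X+Z)), sq_nonneg (c*Y+q3*(X+Z)), hc]
    · have h0 : c*Y + q3*(X+Z) ≠ 0 := by
        rw [hs, mul_zero, add_zero]; exact mul_ne_zero hc.ne' hY
      nlinarith [key, mul_nonneg (mul_pos hc h4).le (sq_nonneg (X-Z)),
        mul_nonneg h5.le (sq_nonneg (X+Z)),
        (show (0:ℝ) < (c*Y+q3*(X+Z))^2 by positivity), hc]
    · have hd : X - Z ≠ 0 := fun h => hZ (by linarith [h, hs])
      nlinarith [key, mul_pos (mul_pos hc h4) (show (0:ℝ) < (X-Z)^2 by positivity),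
        mul_nonneg h5.le (sq_nonneg (X+Z)), sq_nonneg (c*Y+q3*(X+Z)), hc]
  · nlinarith [key, mul_nonneg (mul_pos hc h4).le (sq_nonneg (X-Z)),
      mul_pos h5 (show (0:ℝ) < (X+Z)^2 by positivity), sq_nonneg (c*Y+q3*(X+Z)), hc]

lemma qf2_nonneg (t q4 : ℝ) (ht : 0 < t) (h : 0 < t ^ 2 - q4 ^ 2) (X Y : ℝ) :
    0 ≤ t*X^2 + t*Y^2 + 2*q4*X*Y := by
  have key : t*(t*X^2 + t*Y^2 + 2*q4*X*Y) = (t*X+q4*Y)^2 + (t^2-q4^2)*Y^2 := by ring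
  nlinarith [key, sq_nonneg (t*X+q4*Y), mul_nonneg h.le (sq_nonneg Y), ht]

lemma qf2_pos (t q4 : ℝ) (ht : 0 < t) (h : 0 < t ^ 2 - q4 ^ 2) (X Y : ℝ)
    (hx : X ≠ 0 ∨ Y ≠ 0) : 0 < t*X^2 + t*Y^2 + 2*q4*X*Y := by
  have key : t*(t*X^2 + t*Y^2 + 2*q4*X*Y) = (t*X+q4*Y)^2 + (t^2-q4^2)*Y^2 := by ring
  by_cases hY : Y = 0
  · have hX : X ≠ 0 := by tauto
    subst hY
    nlinarith [mul_pos ht (show (0:ℝ) < X^2 by positivity)]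
  · nlinarith [key, sq_nonneg (t*X+q4*Y),
      mul_pos h (show (0:ℝ) < Y^2 by positivity), ht]

/-- Test vector supported on `(0,4), (2,2), (4,0)`. -/
def tv3 (α β γ : ℝ) : TO4 → ℝ := fun i =>
  if i = bm 0 4 then α else if i = bm 2 2 then β else if i = bm 4 0 then γ else 0

/-- Test vector supported on `(1,3), (3,1)`. -/
def tv2 (α β : ℝ) : TO4 → ℝ := fun i =>
  if i = bm 1 3 then α else if i = bm 3 1 then β else 0

set_option maxHeartbeats 4000000 in
/-- For the degree-4 total order basis, `M + Q` is positive definite iff the five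
stated inequalities hold. -/
theorem stmt_4 (q0 q1 q2 q3 q4 q5 : ℝ) :
    (massTO4 + filterTO4 q0 q1 q2 q3 q4 q5).PosDef ↔
      q0 > -4 / 9 ∧
      q1 > -4 / 21 ∧
      36 * q0 + 225 * q0 * q2 + 100 * q2 - 225 * q3 ^ 2 + 16 > 0 ∧
      (21 * q1 + 4) ^ 2 - 441 * q4 ^ 2 > 0 ∧
      (9 * q0 - 9 * q5 + 4) *
        (9 * q0 * (25 * q2 + 4) + 25 * q2 * (9 * q5 + 4) +
          2 * (-225 * q3 ^ 2 + 18 * q5 + 8)) > 0 := by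
  rw [posdef_iff]
  have hherm := herm q0 q1 q2 q3 q4 q5
  constructor
  · rintro ⟨-, H⟩
    have key3 : ∀ α β γ : ℝ, (α ≠ 0 ∨ β ≠ 0 ∨ γ ≠ 0) →
        0 < (4/9+q0)*α^2 + (4/9+q0)*γ^2 + (4/25+q2)*β^2 + 2*q3*α*β + 2*q3*β*γ + 2*q5*α*γ := by
      intro α β γ hne
      have hxne : tv3 α β γ ≠ 0 := by
        intro h
        rcases hne with h1 | h1 | h1
        · apply h1
          have := congrFun h (bm 0 4)
          simpa (config := { decide := true }) [tv3] using this
        · apply h1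
          have := congrFun h (bm 2 2)
          simpa (config := { decide := true }) [tv3] using this
        · apply h1
          have := congrFun h (bm 4 0)
          simpa (config := { decide := true }) [tv3] using this
      have hq := H _ hxne
      rw [quad] at hq
      simp (config := { decide := true }) only [tv3] at hq
      norm_num at hq
      nlinarith [hq]
    have key2 : ∀ α β : ℝ, (α ≠ 0 ∨ β ≠ 0) →
        0 < (4/21+q1)*α^2 + (4/21+q1)*β^2 + 2*q4*α*β := by
      intro α β hne
      have hxne : tv2 α β ≠ 0 := by
        intro h
        rcases hne with h1 | h1
        · apply h1
          have := congrFun h (bm 1 3)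
          simpa (config := { decide := true }) [tv2] using this
        · apply h1
          have := congrFun h (bm 3 1)
          simpa (config := { decide := true }) [tv2] using this
      have hq := H _ hxne
      rw [quad] at hq
      simp (config := { decide := true }) only [tv2] at hq
      norm_num at hq
      nlinarith [hq]
    have ha : 0 < 4/9 + q0 := by
      have := key3 1 0 0 (Or.inl one_ne_zero); linarith [this]
    have ht : 0 < 4/21 + q1 := by
      have := key2 1 0 (Or.inl one_ne_zero); linarith [this]
    have hac : 0 < (4/9+q0)*(4/25+q2) - q3^2 := by
      have h := key3 q3 (-(4/9+q0)) 0 (Or.inr (Or.inl (by intro hh; nlinarith [ha])))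
      nlinarith [h, ha]
    have htq : 0 < (4/21+q1)^2 - q4^2 := by
      have h := key2 q4 (-(4/21+q1)) (Or.inr (by intro hh; nlinarith [ht]))
      nlinarith [h, ht]
    have hf1 : 0 < (4/9+q0) - q5 := by
      have := key3 1 0 (-1) (Or.inl one_ne_zero); linarith [this]
    have hA : 0 < (4/9+q0) + q5 := by
      have := key3 1 0 1 (Or.inl one_ne_zero); linarith [this]
    have hf2 : 0 < ((4/9+q0)+q5)*(4/25+q2) - 2*q3^2 := by
      have h := key3 (2*q3) (-(2*((4/9+q0)+q5))) (2*q3)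
        (Or.inr (Or.inl (by intro hh; nlinarith [hA])))
      nlinarith [h, hA]
    refine ⟨by linarith, by linarith, by linarith [hac], by linarith [htq],
      by linarith [mul_pos hf1 hf2]⟩
  · rintro ⟨h1, h2, h3, h4, h5⟩
    have ha : 0 < 4/9 + q0 := by linarith
    have ht : 0 < 4/21 + q1 := by linarith
    have hac : 0 < (4/9+q0)*(4/25+q2) - q3^2 := by linarith [h3]
    have hc : 0 < 4/25 + q2 := by nlinarith [hac, ha, sq_nonneg q3]
    have htq : 0 < (4/21+q1)^2 - q4^2 := by linarith [h4]
    have hprod : 0 < ((4/9+q0)-q5) * (((4/9+q0)+q5)*(4/25+q2) - 2*q3^2) := by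
      nlinarith [h5]
    have hf1 : 0 < (4/9+q0) - q5 := by
      by_contra hcon
      push_neg at hcon
      have hF2 : 0 < ((4/9+q0)+q5)*(4/25+q2) - 2*q3^2 := by
        nlinarith [hac, hc, mul_nonneg hc.le (show (0:ℝ) ≤ q5 - (4/9+q0) by linarith)]
      nlinarith [hprod, hF2, hcon]
    have hf2 : 0 < ((4/9+q0)+q5)*(4/25+q2) - 2*q3^2 := by
      by_contra hcon
      push_neg at hcon
      nlinarith [hprod, hf1, hcon]
    refine ⟨hherm, fun x hx => ?_⟩
    rw [quad]
    have hG3 := qf3_nonneg (4/9+q0) (4/25+q2) q3 q5 hc hf1 hf2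
      (x (bm 0 4)) (x (bm 2 2)) (x (bm 4 0))
    have hG2 := qf2_nonneg (4/21+q1) q4 ht htq (x (bm 1 3)) (x (bm 3 1))
    have hP3 := qf3_pos (4/9+q0) (4/25+q2) q3 q5 hc hf1 hf2
      (x (bm 0 4)) (x (bm 2 2)) (x (bm 4 0))
    have hP2 := qf2_pos (4/21+q1) q4 ht htq (x (bm 1 3)) (x (bm 3 1))
    obtain ⟨i, hi⟩ := Function.ne_iff.mp hx
    simp only [Pi.zero_apply] at hi
    rcases i with ⟨⟨v, w⟩, hvw⟩
    fin_cases v <;> fin_cases w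
    · have hi' : x (bm 0 0) ≠ 0 := hi
      linarith [hG3, hG2, sq_nonneg (x (bm 0 1)), sq_nonneg (x (bm 0 2)), sq_nonneg (x (bm 0 3)),
        sq_nonneg (x (bm 1 0)), sq_nonneg (x (bm 1 1)), sq_nonneg (x (bm 1 2)),
        sq_nonneg (x (bm 2 0)), sq_nonneg (x (bm 2 1)), sq_nonneg (x (bm 3 0)),
        (show (0:ℝ) < x (bm 0 0) ^ 2 by positivity)]
    · have hi' : x (bm 0 1) ≠ 0 := hi
      linarith [hG3, hG2, sq_nonneg (x (bm 0 0)), sq_nonneg (x (bm 0 2)), sq_nonneg (x (bm 0 3)),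
        sq_nonneg (x (bm 1 0)), sq_nonneg (x (bm 1 1)), sq_nonneg (x (bm 1 2)),
        sq_nonneg (x (bm 2 0)), sq_nonneg (x (bm 2 1)), sq_nonneg (x (bm 3 0)),
        (show (0:ℝ) < x (bm 0 1) ^ 2 by positivity)]
    · have hi' : x (bm 0 2) ≠ 0 := hi
      linarith [hG3, hG2, sq_nonneg (x (bm 0 0)), sq_nonneg (x (bm 0 1)), sq_nonneg (x (bm 0 3)),
        sq_nonneg (x (bm 1 0)), sq_nonneg (x (bm 1 1)), sq_nonneg (x (bm 1 2)),
        sq_nonneg (x (bm 2 0)), sq_nonneg (x (bm 2 1)), sq_nonneg (x (bm 3 0)),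
        (show (0:ℝ) < x (bm 0 2) ^ 2 by positivity)]
    · have hi' : x (bm 0 3) ≠ 0 := hi
      linarith [hG3, hG2, sq_nonneg (x (bm 0 0)), sq_nonneg (x (bm 0 1)), sq_nonneg (x (bm 0 2)),
        sq_nonneg (x (bm 1 0)), sq_nonneg (x (bm 1 1)), sq_nonneg (x (bm 1 2)),
        sq_nonneg (x (bm 2 0)), sq_nonneg (x (bm 2 1)), sq_nonneg (x (bm 3 0)),
        (show (0:ℝ) < x (bm 0 3) ^ 2 by positivity)]
    · have hi' : x (bm 0 4) ≠ 0 := hi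
      linarith [hP3 (Or.inl hi'), hG2, sq_nonneg (x (bm 0 0)), sq_nonneg (x (bm 0 1)),
        sq_nonneg (x (bm 0 2)), sq_nonneg (x (bm 0 3)),
        sq_nonneg (x (bm 1 0)), sq_nonneg (x (bm 1 1)), sq_nonneg (x (bm 1 2)),
        sq_nonneg (x (bm 2 0)), sq_nonneg (x (bm 2 1)), sq_nonneg (x (bm 3 0))]
    · have hi' : x (bm 1 0) ≠ 0 := hi
      linarith [hG3, hG2, sq_nonneg (x (bm 0 0)), sq_nonneg (x (bm 0 1)), sq_nonneg (x (bm 0 2)),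
        sq_nonneg (x (bm 0 3)), sq_nonneg (x (bm 1 1)), sq_nonneg (x (bm 1 2)),
        sq_nonneg (x (bm 2 0)), sq_nonneg (x (bm 2 1)), sq_nonneg (x (bm 3 0)),
        (show (0:ℝ) < x (bm 1 0) ^ 2 by positivity)]
    · have hi' : x (bm 1 1) ≠ 0 := hi
      linarith [hG3, hG2, sq_nonneg (x (bm 0 0)), sq_nonneg (x (bm 0 1)), sq_nonneg (x (bm 0 2)),
        sq_nonneg (x (bm 0 3)), sq_nonneg (x (bm 1 0)), sq_nonneg (x (bm 1 2)),
        sq_nonneg (x (bm 2 0)), sq_nonneg (x (bm 2 1)), sq_nonneg (x (bm 3 0)),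
        (show (0:ℝ) < x (bm 1 1) ^ 2 by positivity)]
    · have hi' : x (bm 1 2) ≠ 0 := hi
      linarith [hG3, hG2, sq_nonneg (x (bm 0 0)), sq_nonneg (x (bm 0 1)), sq_nonneg (x (bm 0 2)),
        sq_nonneg (x (bm 0 3)), sq_nonneg (x (bm 1 0)), sq_nonneg (x (bm 1 1)),
        sq_nonneg (x (bm 2 0)), sq_nonneg (x (bm 2 1)), sq_nonneg (x (bm 3 0)),
        (show (0:ℝ) < x (bm 1 2) ^ 2 by positivity)]
    · have hi' : x (bm 1 3) ≠ 0 := hi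
      linarith [hG3, hP2 (Or.inl hi'), sq_nonneg (x (bm 0 0)), sq_nonneg (x (bm 0 1)),
        sq_nonneg (x (bm 0 2)), sq_nonneg (x (bm 0 3)), sq_nonneg (x (bm 1 0)),
        sq_nonneg (x (bm 1 1)), sq_nonneg (x (bm 1 2)),
        sq_nonneg (x (bm 2 0)), sq_nonneg (x (bm 2 1)), sq_nonneg (x (bm 3 0))]
    · exact absurd hvw (by decide)
    · have hi' : x (bm 2 0) ≠ 0 := hi
      linarith [hG3, hG2, sq_nonneg (x (bm 0 0)), sq_nonneg (x (bm 0 1)), sq_nonneg (x (bm 0 2)),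
        sq_nonneg (x (bm 0 3)), sq_nonneg (x (bm 1 0)), sq_nonneg (x (bm 1 1)),
        sq_nonneg (x (bm 1 2)), sq_nonneg (x (bm 2 1)), sq_nonneg (x (bm 3 0)),
        (show (0:ℝ) < x (bm 2 0) ^ 2 by positivity)]
    · have hi' : x (bm 2 1) ≠ 0 := hi
      linarith [hG3, hG2, sq_nonneg (x (bm 0 0)), sq_nonneg (x (bm 0 1)), sq_nonneg (x (bm 0 2)),
        sq_nonneg (x (bm 0 3)), sq_nonneg (x (bm 1 0)), sq_nonneg (x (bm 1 1)),
        sq_nonneg (x (bm 1 2)), sq_nonneg (x (bm 2 0)), sq_nonneg (x (bm 3 0)),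
        (show (0:ℝ) < x (bm 2 1) ^ 2 by positivity)]
    · have hi' : x (bm 2 2) ≠ 0 := hi
      linarith [hP3 (Or.inr (Or.inl hi')), hG2, sq_nonneg (x (bm 0 0)), sq_nonneg (x (bm 0 1)),
        sq_nonneg (x (bm 0 2)), sq_nonneg (x (bm 0 3)), sq_nonneg (x (bm 1 0)),
        sq_nonneg (x (bm 1 1)), sq_nonneg (x (bm 1 2)),
        sq_nonneg (x (bm 2 0)), sq_nonneg (x (bm 2 1)), sq_nonneg (x (bm 3 0))]
    · exact absurd hvw (by decide)
    · exact absurd hvw (by decide)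
    · have hi' : x (bm 3 0) ≠ 0 := hi
      linarith [hG3, hG2, sq_nonneg (x (bm 0 0)), sq_nonneg (x (bm 0 1)), sq_nonneg (x (bm 0 2)),
        sq_nonneg (x (bm 0 3)), sq_nonneg (x (bm 1 0)), sq_nonneg (x (bm 1 1)),
        sq_nonneg (x (bm 1 2)), sq_nonneg (x (bm 2 0)), sq_nonneg (x (bm 2 1)),
        (show (0:ℝ) < x (bm 3 0) ^ 2 by positivity)]
    · have hi' : x (bm 3 1) ≠ 0 := hi
      linarith [hG3, hP2 (Or.inr hi'), sq_nonneg (x (bm 0 0)), sq_nonneg (x (bm 0 1)),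
        sq_nonneg (x (bm 0 2)), sq_nonneg (x (bm 0 3)), sq_nonneg (x (bm 1 0)),
        sq_nonneg (x (bm 1 1)), sq_nonneg (x (bm 1 2)),
        sq_nonneg (x (bm 2 0)), sq_nonneg (x (bm 2 1)), sq_nonneg (x (bm 3 0))]
    · exact absurd hvw (by decide)
    · exact absurd hvw (by decide)
    · exact absurd hvw (by decide)
    · have hi' : x (bm 4 0) ≠ 0 := hi
      linarith [hP3 (Or.inr (Or.inr hi')), hG2, sq_nonneg (x (bm 0 0)), sq_nonneg (x (bm 0 1)),
        sq_nonneg (x (bm 0 2)), sq_nonneg (x (bm 0 3)), sq_nonneg (x (bm 1 0)),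
        sq_nonneg (x (bm 1 1)), sq_nonneg (x (bm 1 2)),
        sq_nonneg (x (bm 2 0)), sq_nonneg (x (bm 2 1)), sq_nonneg (x (bm 3 0))]
    · exact absurd hvw (by decide)
    · exact absurd hvw (by decide)
    · exact absurd hvw (by decide)
    · exact absurd hvw (by decide)
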